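/- For any two vertices u, v of a finite connected graph G, u and v are 2-edge-connected in G if and only if for every spanning tree T of G, every tree edge on the tree path between u and v in T has at least one replacement edge. -/

import Mathlib

open SimpleGraph

private lemma lemC {V : Type*} {T : SimpleGraph V} {a b : V} :
    ∀ {w z : V}, T.Walk w z →
      (T.deleteEdges {s(a, b)}).Reachable w z ∨
      ((T.deleteEdges {s(a, b)}).Reachable w a ∧ (T.deleteEdges {s(a, b)}).Reachable b z) ∨
      ((T.deleteEdges {s(a, b)}).Reachable w b ∧ (T.deleteEdges {s(a, b)}).Reachable a z) := by
  intro w z W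
  induction W with
  | nil => exact Or.inl (Reachable.refl _)
  | @cons w c z h q ih =>
    by_cases he : s(w, c) = s(a, b)
    · rw [Sym2.eq_iff] at he
      rcases he with ⟨rfl, rfl⟩ | ⟨rfl, rfl⟩
      · rcases ih with h1 | ⟨h1, h2⟩ | ⟨h1, h2⟩
        · exact Or.inr (Or.inl ⟨Reachable.refl _, h1⟩)
        · exact Or.inl (h1.symm.trans h2)
        · exact Or.inl h2
      · rcases ih with h1 | ⟨h1, h2⟩ | ⟨h1, h2⟩
        · exact Or.inr (Or.inr ⟨Reachable.refl _, h1⟩)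
        · exact Or.inl h2
        · exact Or.inl (h1.symm.trans h2)
    · have hadj : (T.deleteEdges {s(a, b)}).Adj w c := by
        rw [SimpleGraph.deleteEdges_adj]
        exact ⟨h, by simpa using he⟩
      rcases ih with h1 | ⟨h1, h2⟩ | ⟨h1, h2⟩
      · exact Or.inl (hadj.reachable.trans h1)
      · exact Or.inr (Or.inl ⟨hadj.reachable.trans h1, h2⟩)
      · exact Or.inr (Or.inr ⟨hadj.reachable.trans h1, h2⟩)

private lemma lemA {V : Type*} {T : SimpleGraph V} {a b : V} {w : V} (W : T.Walk w a) :
    (T.deleteEdges {s(a, b)}).Reachable w a ∨ (T.deleteEdges {s(a, b)}).Reachable w b := by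
  rcases lemC W with h1 | ⟨h1, h2⟩ | ⟨h1, h2⟩
  · exact Or.inl h1
  · exact Or.inl h1
  · exact Or.inr h1

private lemma lemB {V : Type*} {H K : SimpleGraph V} :
    ∀ {x y : V}, H.Walk x y → ¬ K.Reachable x y →
      ∃ p q : V, H.Adj p q ∧ ¬ K.Reachable p q := by
  intro x y W
  induction W with
  | nil => intro h; exact absurd (Reachable.refl _) h
  | @cons x c _ h q ih =>
    intro hn
    by_cases hr : K.Reachable x c
    · exact ih (fun h' => hn (hr.trans h'))
    · exact ⟨x, c, h, hr⟩

/-- Deleting an edge lying on a cycle preserves connectivity. -/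
private lemma conn_del {V : Type*} {H : SimpleGraph V} (hH : H.Connected)
    {a b : V} (hab : H.Adj a b)
    (hr : (H.deleteEdges {s(a, b)}).Reachable a b) :
    (H.deleteEdges {s(a, b)}).Connected := by
  rw [connected_iff]
  refine ⟨fun x y => ?_, hH.nonempty⟩
  obtain ⟨Wx⟩ := hH.preconnected x a
  obtain ⟨Wy⟩ := hH.preconnected y a
  have hx := lemA (b := b) Wx
  have hy := lemA (b := b) Wy
  rcases hx with hx | hx <;> rcases hy with hy | hy
  · exact hx.trans hy.symm
  · exact hx.trans (hr.trans hy.symm)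
  · exact hx.trans (hr.symm.trans hy.symm)
  · exact hx.trans hy.symm

private lemma exists_spanning_tree {V : Type*} [Fintype V] (G : SimpleGraph V)
    (hG : G.Connected) : ∃ T : SimpleGraph V, T ≤ G ∧ T.IsTree := by
  classical
  suffices h : ∀ n (H : SimpleGraph V), H ≤ G → H.Connected → H.edgeSet.ncard = n →
      ∃ T : SimpleGraph V, T ≤ G ∧ T.IsTree by
    exact h G.edgeSet.ncard G le_rfl hG rfl
  intro n
  induction n using Nat.strong_induction_on with
  | _ n ih =>
    intro H hHG hH hcard
    by_cases hac : H.IsAcyclic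
    · exact ⟨H, hHG, ⟨hH, hac⟩⟩
    · rw [isAcyclic_iff_forall_adj_isBridge] at hac
      push_neg at hac
      obtain ⟨a, b, hab, hbr⟩ := hac
      rw [isBridge_iff] at hbr
      push_neg at hbr
      have hr : (H.deleteEdges {s(a, b)}).Reachable a b := hbr
      have hconn := conn_del hH hab hr
      have hmem : s(a, b) ∈ H.edgeSet := hab
      have hsub : (H.deleteEdges {s(a, b)}).edgeSet = H.edgeSet \ {s(a, b)} :=
        H.edgeSet_deleteEdges _
      have hlt : (H.deleteEdges {s(a, b)}).edgeSet.ncard < n := by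
        rw [hsub, ← hcard]
        exact Set.ncard_diff_singleton_lt_of_mem hmem (Set.toFinite _)
      exact ih _ hlt _ ((H.deleteEdges_le _).trans hHG) hconn rfl

/-- Two vertices `u, v` of a finite connected graph `G` are 2-edge-connected
(no single edge deletion disconnects them) iff for every spanning tree `T` of
`G`, every tree edge on the tree path between `u` and `v` in `T` has at least
one replacement edge. -/
theorem stmt16 {V : Type*} [Fintype V] (G : SimpleGraph V) (hG : G.Connected)
    (u v : V) :
    (∀ e ∈ G.edgeSet, (G.deleteEdges {e}).Reachable u v) ↔
      ∀ T : SimpleGraph V, T ≤ G → T.IsTree →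
        ∀ p : T.Walk u v, p.IsPath →
          ∀ a b : V, T.Adj a b → s(a, b) ∈ p.edges →
            ∃ x y : V, G.Adj x y ∧ ¬ T.Adj x y ∧
              ¬ (T.deleteEdges {s(a, b)}).Reachable x y := by
  classical
  constructor
  · intro h T hTG hT p hp a b hab he
    set e := s(a, b) with hedef
    have heG : e ∈ G.edgeSet := hTG hab
    -- u and v are not reachable in T - e
    have hnuv : ¬ (T.deleteEdges {e}).Reachable u v := by
      rintro ⟨q⟩
      have hq : ∀ f ∈ q.edges, f ∈ T.edgeSet := by
        intro f hf
        have := q.edges_subset_edgeSet hf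
        rw [edgeSet_deleteEdges] at this
        exact this.1
      have hne : ∀ f ∈ q.edges, f ≠ e := by
        intro f hf
        have := q.edges_subset_edgeSet hf
        rw [edgeSet_deleteEdges] at this
        simpa using this.2
      -- transfer to T and apply path uniqueness
      obtain ⟨_, hu⟩ := (isTree_iff_existsUnique_path.mp hT)
      obtain ⟨p', hp', huniq⟩ := hu u v
      have h1 : p = p' := huniq p hp
      have h2 : ((q.transfer T hq).toPath : T.Walk u v) = p' :=
        huniq _ (q.transfer T hq).toPath.2
      have h3 : e ∈ ((q.transfer T hq).toPath : T.Walk u v).edges := by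
        rw [h2, ← h1]; exact he
      have h4 := (q.transfer T hq).edges_toPath_subset h3
      rw [q.edges_transfer hq] at h4
      exact hne e h4 rfl
    obtain ⟨W⟩ := h e heG
    obtain ⟨x, y, hxy, hnr⟩ := lemB W hnuv
    have hxyG : G.Adj x y := ((G.deleteEdges_le _) hxy)
    have hxne : s(x, y) ≠ e := by
      rw [SimpleGraph.deleteEdges_adj] at hxy
      simpa using hxy.2
    refine ⟨x, y, hxyG, ?_, hnr⟩
    intro hTxy
    have : (T.deleteEdges {e}).Adj x y := by
      rw [SimpleGraph.deleteEdges_adj]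
      exact ⟨hTxy, by simpa using hxne⟩
    exact hnr this.reachable
  · intro h e
    induction e using Sym2.ind with
    | _ a b =>
    intro heG
    obtain ⟨T, hTG, hT⟩ := exists_spanning_tree G hG
    have hTc := hT.isConnected
    obtain ⟨W⟩ := hTc.preconnected u v
    set p : T.Path u v := W.toPath with hpdef
    have hTle : T.deleteEdges {s(a, b)} ≤ G.deleteEdges {s(a, b)} := by
      intro x y hxy
      rw [SimpleGraph.deleteEdges_adj] at hxy ⊢
      exact ⟨hTG hxy.1, hxy.2⟩
    by_cases hep : s(a, b) ∈ (p : T.Walk u v).edges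
    · have hab : T.Adj a b := T.mem_edgeSet.mp ((p : T.Walk u v).edges_subset_edgeSet hep)
      obtain ⟨x, y, hxy, hnT, hnr⟩ := h T hTG hT p p.2 a b hab hep
      -- x-y is an edge of G - e
      have hxyd : (G.deleteEdges {s(a, b)}).Adj x y := by
        rw [SimpleGraph.deleteEdges_adj]
        refine ⟨hxy, ?_⟩
        simp only [Set.mem_singleton_iff]
        intro hcontra
        rw [Sym2.eq_iff] at hcontra
        rcases hcontra with ⟨rfl, rfl⟩ | ⟨rfl, rfl⟩
        · exact hnT hab
        · exact hnT hab.symm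
      -- reachability facts in T - e, pushed to G - e
      have push : ∀ {c d : V}, (T.deleteEdges {s(a, b)}).Reachable c d →
          (G.deleteEdges {s(a, b)}).Reachable c d := fun hr => hr.mono hTle
      obtain ⟨Wx⟩ := hTc.preconnected x a
      obtain ⟨Wy⟩ := hTc.preconnected y a
      obtain ⟨Wu⟩ := hTc.preconnected u a
      obtain ⟨Wv⟩ := hTc.preconnected v a
      have hx := lemA (b := b) Wx
      have hy := lemA (b := b) Wy
      have hu' := lemA (b := b) Wu
      have hv' := lemA (b := b) Wv
      -- a and b are connected in G - e via the edge x-y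
      have hrab : (G.deleteEdges {s(a, b)}).Reachable a b := by
        rcases hx with hx | hx <;> rcases hy with hy | hy
        · exact absurd (hx.trans hy.symm) hnr
        · exact (push hx).symm.trans (hxyd.reachable.trans (push hy))
        · exact (push hy).symm.trans (hxyd.reachable.symm.trans (push hx))
        · exact absurd (hx.trans hy.symm) hnr
      rcases hu' with hu' | hu' <;> rcases hv' with hv' | hv'
      · exact (push hu').trans (push hv').symm
      · exact (push hu').trans (hrab.trans (push hv').symm)
      · exact (push hu').trans (hrab.symm.trans (push hv').symm)
      · exact (push hu').trans (push hv').symm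
    · -- the path avoids e; transfer it to G - e
      have hsub : ∀ f ∈ (p : T.Walk u v).edges, f ∈ (G.deleteEdges {s(a, b)}).edgeSet := by
        intro f hf
        rw [edgeSet_deleteEdges]
        refine ⟨edgeSet_mono hTG ((p : T.Walk u v).edges_subset_edgeSet hf), ?_⟩
        simp only [Set.mem_singleton_iff]
        rintro rfl
        exact hep hf
      exact ⟨(p : T.Walk u v).transfer _ hsub⟩
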